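/- (Converse of Rado's inequality.) Let G be a subgroup of the symmetric group Sₙ and let a, b ∈ ℝⁿ be nonnegative vectors. If [x^b]_G ≤ [x^a]_G for every positive vector x ∈ ℝⁿ, then b belongs to K_G(a), the convex hull in ℝⁿ of the set {γa : γ ∈ G}, where (γa)_i = a_{γ⁻¹(i)}. -/

import Mathlib

open Finset

private lemma clm_apply_eq_sum {n : ℕ} (f : (Fin n → ℝ) →L[ℝ] ℝ) (x : Fin n → ℝ) :
    f x = ∑ i, x i * f (Pi.single i 1) := by
  conv_lhs => rw [← Finset.univ_sum_single x]
  rw [map_sum]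
  refine Finset.sum_congr rfl fun i _ => ?_
  have h : (Pi.single i (x i) : Fin n → ℝ) = x i • (Pi.single i (1:ℝ) : Fin n → ℝ) := by
    funext j
    rcases eq_or_ne j i with rfl | hji
    · simp
    · simp [Pi.single_apply, hji]
  rw [h, map_smul, smul_eq_mul]

set_option maxHeartbeats 1000000 in
theorem stmt_15 (n : ℕ) (G : Subgroup (Equiv.Perm (Fin n))) [DecidablePred (· ∈ G)]
    (a b : Fin n → ℝ) (ha : ∀ i, 0 ≤ a i) (hb : ∀ i, 0 ≤ b i)
    (hle : ∀ x : Fin n → ℝ, (∀ i, 0 < x i) →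
      (1 / (Fintype.card G : ℝ)) * ∑ σ : G, ∏ i, x ((σ : Equiv.Perm (Fin n)) i) ^ b i
        ≤ (1 / (Fintype.card G : ℝ)) * ∑ σ : G, ∏ i, x ((σ : Equiv.Perm (Fin n)) i) ^ a i) :
    b ∈ convexHull ℝ
      {z : Fin n → ℝ | ∃ γ ∈ G, z = fun i => a (γ⁻¹ i)} := by
  by_contra hmem
  set S : Set (Fin n → ℝ) := {z : Fin n → ℝ | ∃ γ ∈ G, z = fun i => a (γ⁻¹ i)} with hS
  have hSfin : S.Finite := by
    have hEq : S = (fun γ : Equiv.Perm (Fin n) => fun i => a (γ⁻¹ i)) '' (G : Set _) := by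
      ext z
      simp only [hS, Set.mem_setOf_eq, Set.mem_image, SetLike.mem_coe]
      constructor
      · rintro ⟨γ, hγ, rfl⟩; exact ⟨γ, hγ, rfl⟩
      · rintro ⟨γ, hγ, rfl⟩; exact ⟨γ, hγ, rfl⟩
    rw [hEq]; exact (Set.toFinite _).image _
  have hclosed : IsClosed (convexHull ℝ S) := (hSfin.isCompact_convexHull (𝕜 := ℝ)).isClosed
  obtain ⟨f, u, hfu, hub⟩ :=
    geometric_hahn_banach_closed_point (convex_convexHull ℝ S) hclosed hmem
  set c : Fin n → ℝ := fun i => f (Pi.single i 1) with hc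
  have hfb : f b = ∑ i, b i * c i := clm_apply_eq_sum f b
  have hfa : ∀ γ : Equiv.Perm (Fin n), γ ∈ G → ∑ i, a i * c (γ i) < u := by
    intro γ hγ
    have h1 : (fun i => a (γ⁻¹ i)) ∈ S := ⟨γ, hγ, rfl⟩
    have h2 := hfu _ (subset_convexHull ℝ S h1)
    rw [clm_apply_eq_sum] at h2
    calc ∑ i, a i * c (γ i) = ∑ i, a (γ⁻¹ i) * c i := by
          rw [← Equiv.sum_comp γ (fun i => a (γ⁻¹ i) * c i)]
          simp
      _ < u := h2
  have hcard1 : (1 : ℝ) ≤ (Fintype.card G : ℝ) := by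
    exact_mod_cast Fintype.card_pos
  have hcard : (0 : ℝ) < (Fintype.card G : ℝ) := lt_of_lt_of_le one_pos hcard1
  set β := f b with hβ
  have hβu : u < β := hub
  have hlog : 0 ≤ Real.log (Fintype.card G : ℝ) := Real.log_nonneg hcard1
  set t := (Real.log (Fintype.card G : ℝ) + 1) / (β - u) with ht_def
  have ht : 0 < t := div_pos (by linarith) (sub_pos.2 hβu)
  set x : Fin n → ℝ := fun i => Real.exp (t * c i) with hx
  have hxpos : ∀ i, 0 < x i := fun i => Real.exp_pos _
  have hprod : ∀ (w : Fin n → ℝ) (σ : Equiv.Perm (Fin n)),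
      ∏ i, x (σ i) ^ w i = Real.exp (t * ∑ i, w i * c (σ i)) := by
    intro w σ
    rw [Finset.mul_sum, Real.exp_sum]
    refine Finset.prod_congr rfl fun i _ => ?_
    rw [hx]
    rw [Real.rpow_def_of_pos (Real.exp_pos _), Real.log_exp]
    ring_nf
  have hkey := hle x hxpos
  have hsum : (∑ σ : G, ∏ i, x ((σ : Equiv.Perm (Fin n)) i) ^ b i)
      ≤ ∑ σ : G, ∏ i, x ((σ : Equiv.Perm (Fin n)) i) ^ a i :=
    le_of_mul_le_mul_left (by simpa [mul_comm] using hkey) (by positivity)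
  have hLHS : Real.exp (t * β) ≤ ∑ σ : G, ∏ i, x ((σ : Equiv.Perm (Fin n)) i) ^ b i := by
    have h1 : (∏ i, x (((1 : G) : Equiv.Perm (Fin n)) i) ^ b i) = Real.exp (t * β) := by
      rw [hprod b (((1 : G) : Equiv.Perm (Fin n)))]
      simp only [OneMemClass.coe_one, Equiv.Perm.one_apply]
      rw [hfb]
    rw [← h1]
    exact Finset.single_le_sum (f := fun σ : G => ∏ i, x ((σ : Equiv.Perm (Fin n)) i) ^ b i)
      (fun σ _ => Finset.prod_nonneg fun i _ =>
      Real.rpow_nonneg (hxpos _).le _) (Finset.mem_univ (1 : G))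
  have hRHS : (∑ σ : G, ∏ i, x ((σ : Equiv.Perm (Fin n)) i) ^ a i)
      ≤ (Fintype.card G : ℝ) * Real.exp (t * u) := by
    calc (∑ σ : G, ∏ i, x ((σ : Equiv.Perm (Fin n)) i) ^ a i)
        ≤ ∑ _σ : G, Real.exp (t * u) := by
          refine Finset.sum_le_sum fun σ _ => ?_
          rw [hprod a σ]
          exact Real.exp_le_exp.2 (mul_le_mul_of_nonneg_left (hfa σ σ.2).le ht.le)
      _ = (Fintype.card G : ℝ) * Real.exp (t * u) := by
          rw [Finset.sum_const, Finset.card_univ, nsmul_eq_mul]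
  have hfinal : Real.exp (t * β) ≤ (Fintype.card G : ℝ) * Real.exp (t * u) :=
    le_trans hLHS (le_trans hsum hRHS)
  have hexp : Real.exp (t * β) = Real.exp (t * (β - u)) * Real.exp (t * u) := by
    rw [← Real.exp_add]; ring_nf
  have htβu : t * (β - u) = Real.log (Fintype.card G : ℝ) + 1 := by
    rw [ht_def, div_mul_cancel₀ _ (sub_ne_zero.2 hβu.ne')]
  have hgt : (Fintype.card G : ℝ) < Real.exp (t * (β - u)) := by
    rw [htβu, Real.exp_add, Real.exp_log hcard]
    nlinarith [Real.exp_one_gt_d9]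
  have : (Fintype.card G : ℝ) * Real.exp (t * u) < Real.exp (t * β) := by
    rw [hexp]
    exact mul_lt_mul_of_pos_right hgt (Real.exp_pos _)
  linarith
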